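/- Let M be a simple rank-3 matroid with no restriction isomorphic to U_{3,5}. Then either M has no U_{2,5}-minor, or the ground set of M is the union of two lines. -/

import Mathlib

open Matroid Set Filter

variable {α : Type*}

/-- The number of bases of a matroid. -/
noncomputable def Matroid.numBases (M : Matroid α) : ℕ := {B : Set α | M.IsBase B}.ncard

/-- Deletion of a set of elements from a matroid. -/
def Matroid.del (M : Matroid α) (D : Set α) : Matroid α := M ↾ (M.E \ D)

/-- Contraction of a set of elements in a matroid, defined by duality. -/
def Matroid.con (M : Matroid α) (C : Set α) : Matroid α := (M✶ ↾ (M✶.E \ C))✶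

/-- `N` is a minor of `M`: it is obtained by contracting a set `C` and deleting a set `D`. -/
def Matroid.IsMinorOf (N M : Matroid α) : Prop :=
  ∃ C D : Set α, C ⊆ M.E ∧ D ⊆ M.E ∧ Disjoint C D ∧ N = (M.con C).del D

/-- `M` is (a copy of) the uniform matroid `U_{s,t}`: it has `t` elements and its bases are
exactly the `s`-element subsets of the ground set. -/
def Matroid.IsUnif (M : Matroid α) (s t : ℕ) : Prop :=
  M.E.Finite ∧ M.E.ncard = t ∧ ∀ B, M.IsBase B ↔ B ⊆ M.E ∧ B.ncard = s

/-- `M` has a minor isomorphic to the uniform matroid `U_{s,t}`. -/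
def Matroid.HasUnifMinor (M : Matroid α) (s t : ℕ) : Prop :=
  ∃ N : Matroid α, N.IsMinorOf M ∧ N.IsUnif s t

/-- `M` has a restriction isomorphic to the uniform matroid `U_{s,t}`. -/
def Matroid.HasUnifRestriction (M : Matroid α) (s t : ℕ) : Prop :=
  ∃ X ⊆ M.E, (M ↾ X).IsUnif s t

/-- `M` has rank `r`. -/
def Matroid.RankEq (M : Matroid α) (r : ℕ) : Prop := ∃ B, M.IsBase B ∧ B.ncard = r

/-- `M` is a simple matroid: every single element and every pair of distinct elements
of the ground set is independent. -/
def Matroid.IsSimple (M : Matroid α) : Prop :=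
  (∀ e ∈ M.E, M.Indep {e}) ∧ ∀ e ∈ M.E, ∀ f ∈ M.E, e ≠ f → M.Indep {e, f}

/-- A line of a matroid: a maximal subset of the ground set of rank 2. -/
def Matroid.IsLine (M : Matroid α) (L : Set α) : Prop :=
  L ⊆ M.E ∧ (∀ I ⊆ L, M.Indep I → I.ncard ≤ 2) ∧ (∃ I ⊆ L, M.Indep I ∧ I.ncard = 2) ∧
    ∀ L', L ⊆ L' → L' ⊆ M.E → (∀ I ⊆ L', M.Indep I → I.ncard ≤ 2) → L' = L

namespace U35Aux


variable {M : Matroid α} {B C D I J L X Y : Set α} {a b c e p q u v w x y z : α}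

lemma con_ground (M : Matroid α) (C : Set α) : (M.con C).E = M.E \ C := rfl

lemma del_ground (M : Matroid α) (D : Set α) : (M.del D).E = M.E \ D := rfl

lemma con_indep_extract (hJ : M.IsBasis' J C) (hI : (M.con C).Indep I) :
    M.Indep (I ∪ J) ∧ I ⊆ M.E \ C := by
  have hI' : ((M✶ ↾ (M✶.E \ C))✶).Indep I := hI
  rw [dual_indep_iff_exists'] at hI'
  obtain ⟨hIsub, B0, hB0, hdis⟩ := hI'
  rw [restrict_ground_eq] at hIsub
  have hB0' : M✶.IsBasis' B0 (M✶.E \ C) := isBase_restrict_iff'.mp hB0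
  have hB0sub : B0 ⊆ M.E \ C := hB0'.subset
  have hB0E : B0 ⊆ M.E := hB0sub.trans diff_subset
  have hW : M.Spanning (M.E \ B0) := (coindep_iff_compl_spanning hB0E).mp hB0'.indep
  have hmax : ∀ w ∈ M.E \ C, w ∉ B0 → ¬ M.Spanning (M.E \ insert w B0) := by
    intro w hw hwB0 hsp
    have hins : M✶.Indep (insert w B0) :=
      (coindep_iff_compl_spanning (insert_subset hw.1 hB0E)).mpr hsp
    have := hB0'.2 ⟨hins, insert_subset hw hB0sub⟩ (subset_insert _ _)
    exact hwB0 (this (mem_insert _ _))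
  have hJW : J ⊆ M.E \ B0 := fun t ht =>
    ⟨hJ.indep.subset_ground ht, fun htB0 => (hB0sub htB0).2 (hJ.subset ht)⟩
  obtain ⟨B'', hB''b, hJB''⟩ := hJ.indep.subset_isBasis_of_subset hJW diff_subset
  have hbase : M.IsBase B'' := by
    refine hB''b.indep.isBase_of_ground_subset_closure ?_
    rw [hB''b.closure_eq_closure, (spanning_iff_closure_eq diff_subset).mp hW]
  have hWB'' : ∀ w, w ∈ M.E \ B0 → w ∉ C → w ∈ B'' := by
    intro w hw hwC
    by_contra hwB
    apply hmax w ⟨hw.1, hwC⟩ hw.2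
    have heq : (M.E \ B0) \ {w} = M.E \ insert w B0 := by
      rw [diff_diff, union_singleton]
    rw [← heq]
    exact hbase.spanning.superset (subset_diff_singleton hB''b.subset hwB)
      (diff_subset.trans diff_subset)
  constructor
  · refine hbase.indep.subset (union_subset ?_ hJB'')
    intro t ht
    exact hWB'' t ⟨(hIsub ht).1, fun htB0 => (hdis.ne_of_mem ht htB0) rfl⟩ (hIsub ht).2
  · exact hIsub

lemma con_indep_intro (hC : C ⊆ M.E) (hJ : M.IsBasis' J C) (hIE : I ⊆ M.E \ C)
    (hind : M.Indep (I ∪ J)) : (M.con C).Indep I := by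
  obtain ⟨B', hB', hIJB'⟩ := hind.exists_isBase_superset
  have hJB' : J ⊆ B' := subset_union_right.trans hIJB'
  have hIB' : I ⊆ B' := subset_union_left.trans hIJB'
  have hB'E : B' ⊆ M.E := hB'.subset_ground
  have hBCE : B' ∪ C ⊆ M.E := union_subset hB'E hC
  show ((M✶ ↾ (M✶.E \ C))✶).Indep I
  rw [dual_indep_iff_exists']
  refine ⟨by rwa [restrict_ground_eq], M.E \ (B' ∪ C), ?_, ?_⟩
  · rw [isBase_restrict_iff']
    constructor
    · constructor
      · refine (coindep_iff_compl_spanning diff_subset).mpr ?_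
        rw [diff_diff_cancel_left hBCE]
        exact hB'.spanning.superset subset_union_left hBCE
      · exact diff_subset_diff_right subset_union_right
    · rintro Y ⟨hYi, hYsub⟩ hB0Y
      by_contra hns
      obtain ⟨w, hwY, hwB0⟩ := not_subset.mp hns
      have hwE : w ∈ M.E := (hYsub hwY).1
      have hwC : w ∉ C := (hYsub hwY).2
      have hwB' : w ∈ B' := by
        rcases (by_contra fun h => hwB0 ⟨hwE, fun hmem => h (by tauto)⟩ :
          w ∈ B' ∪ C) with h | h
        · exact h
        · exact absurd h hwC
      have hYE : Y ⊆ M.E := hYsub.trans diff_subset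
      have hspY : M.Spanning (M.E \ Y) := (coindep_iff_compl_spanning hYE).mp hYi
      have hsub : M.E \ Y ⊆ (B' ∪ C) \ {w} := by
        intro t ht
        refine ⟨?_, fun htw => ht.2 (htw ▸ hwY)⟩
        by_contra htBC
        exact ht.2 (hB0Y ⟨ht.1, htBC⟩)
      have hsp2 : M.Spanning ((B' ∪ C) \ {w}) :=
        hspY.superset hsub (diff_subset.trans hBCE)
      have hCcl : C ⊆ M.closure J := (hJ.isBasis hC).subset_closure
      have hwJ : w ∉ J := fun h => hwC (hJ.subset h)
      have hJw : J ⊆ B' \ {w} := subset_diff_singleton hJB' hwJ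
      have hsub2 : (B' ∪ C) \ {w} ⊆ M.closure (B' \ {w}) := by
        rintro t ⟨ht, htw⟩
        rcases ht with h | h
        · exact M.mem_closure_of_mem ⟨h, htw⟩ (diff_subset.trans hB'E)
        · exact (M.closure_subset_closure hJw) (hCcl h)
      have : M.E ⊆ M.closure (B' \ {w}) := by
        rw [← (spanning_iff_closure_eq (diff_subset.trans hBCE)).mp hsp2]
        exact M.closure_subset_closure_of_subset_closure hsub2
      exact hB'.indep.notMem_closure_diff_of_mem hwB' (this hwE)
  · exact disjoint_left.mpr fun t ht htB0 => htB0.2 (Or.inl (hIB' ht))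



variable {M : Matroid α} {B C D I J L X Y : Set α} {a b c e p q u v w x y z : α}

section Geometry

variable (hfin : M.E.Finite) (hs : M.IsSimple) (hrank : M.RankEq 3)

include hfin hrank in
lemma indep_card_le (hI : M.Indep I) : I.ncard ≤ 3 := by
  obtain ⟨B0, hB0, hB03⟩ := hrank
  obtain ⟨B, hB, hIB⟩ := hI.exists_isBase_superset
  have hBfin : B.Finite := hfin.subset hB.subset_ground
  have := hB.ncard_eq_ncard_of_isBase hB0
  calc I.ncard ≤ B.ncard := ncard_le_ncard hIB hBfin
  _ = 3 := by rw [this, hB03]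

include hs in
lemma pair_indep (hx : x ∈ M.E) (hy : y ∈ M.E) (hxy : x ≠ y) : M.Indep {x, y} :=
  hs.2 x hx y hy hxy

include hs in
lemma insert3 (hxy : x ≠ y) (hx : x ∈ M.E) (hy : y ∈ M.E) (hz : z ∈ M.E)
    (hzcl : z ∉ M.closure {x, y}) : M.Indep {z, x, y} := by
  have hp := pair_indep hs hx hy hxy
  exact hp.insert_indep_iff.mpr (Or.inl ⟨hz, hzcl⟩)

lemma indep3_comm12 (h : M.Indep {x, y, z}) : M.Indep {y, x, z} := by
  rwa [Set.insert_comm]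

lemma indep3_comm23 (h : M.Indep {x, y, z}) : M.Indep {x, z, y} := by
  rwa [Set.pair_comm z y]

include hs in
lemma dep3_mem_closure (hxy : x ≠ y) (hzx : z ≠ x) (hzy : z ≠ y)
    (hx : x ∈ M.E) (hy : y ∈ M.E) (hz : z ∈ M.E)
    (hdep : ¬ M.Indep {x, y, z}) : z ∈ M.closure {x, y} := by
  by_contra hzcl
  exact hdep (indep3_comm23 (indep3_comm12 (insert3 hs hxy hx hy hz hzcl)))

lemma indep3_not_mem_closure (h : M.Indep {z, x, y}) (hzx : z ≠ x) (hzy : z ≠ y) :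
    z ∉ M.closure {x, y} := by
  have hmem : z ∈ ({z, x, y} : Set α) := mem_insert _ _
  have := h.notMem_closure_diff_of_mem hmem
  have hset : ({z, x, y} : Set α) \ {z} = {x, y} := by
    ext t; simp only [mem_diff, mem_insert_iff, mem_singleton_iff]
    constructor
    · rintro ⟨h1 | h1 | h1, h2⟩ <;> tauto
    · rintro (rfl | rfl) <;> exact ⟨by tauto, by rintro rfl; simp_all⟩
  rwa [hset] at this

include hfin hs hrank in
lemma line_card (hab : a ≠ b) (ha : a ∈ M.E) (hb : b ∈ M.E)
    (hI : M.Indep I) (hIL : I ⊆ M.closure {a, b}) : I.ncard ≤ 2 := by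
  have hpairE : ({a, b} : Set α) ⊆ M.E := by simp [insert_subset_iff, ha, hb]
  obtain ⟨Jb, hJb, hIJb⟩ := hI.subset_isBasis_of_subset hIL (M.closure_subset_ground _)
  have h1 : (M ↾ M.closure {a, b}).IsBase Jb := (isBase_restrict_iff (M.closure_subset_ground _)).mpr hJb
  have h2 : (M ↾ M.closure {a, b}).IsBase {a, b} :=
    (isBase_restrict_iff (M.closure_subset_ground _)).mpr (pair_indep hs ha hb hab).isBasis_closure
  have hJfin : Jb.Finite := hfin.subset (hJb.indep.subset_ground)
  calc I.ncard ≤ Jb.ncard := ncard_le_ncard hIJb hJfin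
  _ = ({a, b} : Set α).ncard := h1.ncard_eq_ncard_of_isBase h2
  _ = 2 := ncard_pair hab

include hfin hs hrank in
lemma span2 (hab : a ≠ b) (ha : a ∈ M.E) (hb : b ∈ M.E)
    (hp : p ∈ M.closure {a, b}) (hq : q ∈ M.closure {a, b}) (hpq : p ≠ q) :
    M.closure {p, q} = M.closure {a, b} := by
  have hpE : p ∈ M.E := M.closure_subset_ground _ hp
  have hqE : q ∈ M.E := M.closure_subset_ground _ hq
  have hsub : ({p, q} : Set α) ⊆ M.closure {a, b} := by
    simp [insert_subset_iff, hp, hq]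
  refine Subset.antisymm (M.closure_subset_closure_of_subset_closure hsub) ?_
  intro t ht
  by_contra htcl
  have htE : t ∈ M.E := M.closure_subset_ground _ ht
  have htmem : t ∉ ({p, q} : Set α) :=
    fun h => htcl (M.subset_closure {p, q} (by simp [insert_subset_iff, hpE, hqE]) h)
  have htp : t ≠ p := fun h => htmem (by simp [h])
  have htq : t ≠ q := fun h => htmem (by simp [h])
  have hind : M.Indep {t, p, q} := insert3 hs hpq hpE hqE htE htcl
  have hsub3 : ({t, p, q} : Set α) ⊆ M.closure {a, b} := by
    simp [insert_subset_iff, ht, hp, hq]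
  have hcard := line_card hfin hs hrank hab ha hb hind hsub3
  have : ({t, p, q} : Set α).ncard = 3 := by
    rw [ncard_insert_of_notMem (by simp [htp, htq]), ncard_pair hpq]
  omega

include hfin hs hrank in
lemma lines_meet (hab : a ≠ b) (ha : a ∈ M.E) (hb : b ∈ M.E)
    (huv : u ≠ v) (hu : u ∈ M.E) (hv : v ∈ M.E) (hnot : u ∉ M.closure {a, b}) :
    (M.closure {a, b} ∩ M.closure {u, v}).Subsingleton := by
  rintro p ⟨hp1, hp2⟩ q ⟨hq1, hq2⟩
  by_contra hpq
  have h1 := span2 hfin hs hrank hab ha hb hp1 hq1 hpq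
  have h2 := span2 hfin hs hrank huv hu hv hp2 hq2 hpq
  have : u ∈ M.closure {a, b} := by
    rw [← h1, h2]
    exact M.mem_closure_of_mem (mem_insert _ _) (by simp [insert_subset_iff, hu, hv])
  exact hnot this

lemma ncard_diff_subsingleton_ge (hL : L.Finite) (hB : (L ∩ B).Subsingleton) :
    L.ncard - 1 ≤ (L \ B).ncard := by
  have h1 : L \ B = L \ (L ∩ B) := diff_self_inter.symm
  have h2 : (L ∩ B).ncard ≤ 1 := by
    rcases hB.eq_empty_or_singleton with h | ⟨x, h⟩ <;> simp [h]
  rw [h1, ncard_diff inter_subset_left (hL.subset inter_subset_left)]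
  omega

end Geometry



variable {M : Matroid α} {B C D I J L X Y : Set α} {a b c e p q u v w x y z : α}

section Unif

variable (hfin : M.E.Finite) (hs : M.IsSimple) (hrank : M.RankEq 3)

include hfin hs hrank in
lemma isUnif35 (hXE : X ⊆ M.E) (hX5 : X.ncard = 5)
    (htri : ∀ x ∈ X, ∀ y ∈ X, ∀ z ∈ X, x ≠ y → x ≠ z → y ≠ z → M.Indep {x, y, z}) :
    (M ↾ X).IsUnif 3 5 := by
  have hXfin : X.Finite := hfin.subset hXE
  have hsub3 : ∀ I, I ⊆ X → I.ncard ≤ 3 → M.Indep I := by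
    intro I hIX hI3
    have hIfin : I.Finite := hXfin.subset hIX
    rcases (by omega : I.ncard = 0 ∨ I.ncard = 1 ∨ I.ncard = 2 ∨ I.ncard = 3) with h | h | h | h
    · rw [(ncard_eq_zero hIfin).mp h]; exact M.empty_indep
    · obtain ⟨u, rfl⟩ := ncard_eq_one.mp h
      exact hs.1 u (hXE (hIX rfl))
    · obtain ⟨u, v, huv, rfl⟩ := ncard_eq_two.mp h
      exact hs.2 u (hXE (hIX (by simp))) v (hXE (hIX (by simp))) huv
    · obtain ⟨u, v, w', huv, huw, hvw, rfl⟩ := ncard_eq_three.mp h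
      exact htri u (hIX (by simp)) v (hIX (by simp)) w' (hIX (by simp)) huv huw hvw
  refine ⟨by simpa using hXfin, by simpa using hX5, ?_⟩
  intro B
  rw [restrict_ground_eq, isBase_restrict_iff hXE]
  constructor
  · intro hB
    refine ⟨hB.subset, ?_⟩
    have hle := indep_card_le hfin hrank hB.indep
    have hBfin : B.Finite := hXfin.subset hB.subset
    by_contra hne
    have hlt : B.ncard ≤ 2 := by omega
    have hnsub : ¬ X ⊆ B := by
      intro hXB
      have := ncard_le_ncard hXB hBfin
      omega
    obtain ⟨w', hwX, hwB⟩ := not_subset.mp hnsub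
    have hins : M.Indep (insert w' B) := by
      refine hsub3 _ (insert_subset hwX hB.subset) ?_
      have := ncard_insert_le w' B
      omega
    exact hwB (hB.mem_of_insert_indep hwX hins)
  · rintro ⟨hBX, hB3⟩
    have hBi : M.Indep B := hsub3 B hBX hB3.le
    refine hBi.isBasis_of_subset_of_subset_closure hBX ?_
    intro w' hw
    by_cases hwB : w' ∈ B
    · exact M.mem_closure_of_mem hwB (hBX.trans hXE)
    have hnind : ¬ M.Indep (insert w' B) := by
      intro hind
      have := indep_card_le hfin hrank hind
      rw [ncard_insert_of_notMem hwB (hfin.subset (hBX.trans hXE))] at this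
      omega
    have := hBi.insert_indep_iff_of_notMem hwB
    rw [this] at hnind
    simp only [mem_diff, not_and, not_not] at hnind
    exact hnind (hXE hw)

include hfin hs hrank in
lemma no_five (hU35 : ¬ M.HasUnifRestriction 3 5)
    {p₁ p₂ p₃ p₄ p₅ : α}
    (h1 : p₁ ∈ M.E) (h2 : p₂ ∈ M.E) (h3 : p₃ ∈ M.E) (h4 : p₄ ∈ M.E) (h5 : p₅ ∈ M.E)
    (d12 : p₁ ≠ p₂) (d13 : p₁ ≠ p₃) (d14 : p₁ ≠ p₄) (d15 : p₁ ≠ p₅)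
    (d23 : p₂ ≠ p₃) (d24 : p₂ ≠ p₄) (d25 : p₂ ≠ p₅)
    (d34 : p₃ ≠ p₄) (d35 : p₃ ≠ p₅) (d45 : p₄ ≠ p₅)
    (i123 : M.Indep {p₁, p₂, p₃}) (i124 : M.Indep {p₁, p₂, p₄}) (i125 : M.Indep {p₁, p₂, p₅})
    (i134 : M.Indep {p₁, p₃, p₄}) (i135 : M.Indep {p₁, p₃, p₅}) (i145 : M.Indep {p₁, p₄, p₅})
    (i234 : M.Indep {p₂, p₃, p₄}) (i235 : M.Indep {p₂, p₃, p₅}) (i245 : M.Indep {p₂, p₄, p₅})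
    (i345 : M.Indep {p₃, p₄, p₅}) : False := by
  apply hU35
  refine ⟨{p₁, p₂, p₃, p₄, p₅}, by simp [insert_subset_iff, h1, h2, h3, h4, h5], ?_⟩
  have perm : ∀ u v w' : α, M.Indep {u, v, w'} →
      M.Indep {u, v, w'} ∧ M.Indep {u, w', v} ∧ M.Indep {v, u, w'} ∧
      M.Indep {v, w', u} ∧ M.Indep {w', u, v} ∧ M.Indep {w', v, u} := by
    intro u v w' h
    refine ⟨h, indep3_comm23 h, indep3_comm12 h, ?_, ?_, ?_⟩
    · exact indep3_comm23 (indep3_comm12 h)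
    · exact indep3_comm12 (indep3_comm23 h)
    · exact indep3_comm23 (indep3_comm12 (indep3_comm23 h))
  obtain ⟨j1,j2,j3,j4,j5,j6⟩ := perm _ _ _ i123
  obtain ⟨k1,k2,k3,k4,k5,k6⟩ := perm _ _ _ i124
  obtain ⟨l1,l2,l3,l4,l5,l6⟩ := perm _ _ _ i125
  obtain ⟨m1,m2,m3,m4,m5,m6⟩ := perm _ _ _ i134
  obtain ⟨n1,n2,n3,n4,n5,n6⟩ := perm _ _ _ i135
  obtain ⟨o1,o2,o3,o4,o5,o6⟩ := perm _ _ _ i145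
  obtain ⟨q1,q2,q3,q4,q5,q6⟩ := perm _ _ _ i234
  obtain ⟨r1,r2,r3,r4,r5,r6⟩ := perm _ _ _ i235
  obtain ⟨s1,s2,s3,s4,s5,s6⟩ := perm _ _ _ i245
  obtain ⟨t1,t2,t3,t4,t5,t6⟩ := perm _ _ _ i345
  apply isUnif35 hfin hs hrank (by simp [insert_subset_iff, h1, h2, h3, h4, h5])
  · rw [ncard_insert_of_notMem (by simp [d12, d13, d14, d15]),
      ncard_insert_of_notMem (by simp [d23, d24, d25]),
      ncard_insert_of_notMem (by simp [d34, d35]), ncard_pair d45]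
  · intro x hx y hy z hz hxy hxz hyz
    simp only [mem_insert_iff, mem_singleton_iff] at hx hy hz
    rcases hx with rfl | rfl | rfl | rfl | rfl <;>
      rcases hy with rfl | rfl | rfl | rfl | rfl <;>
        rcases hz with rfl | rfl | rfl | rfl | rfl <;>
          first
            | exact absurd rfl hxy
            | exact absurd rfl hxz
            | exact absurd rfl hyz
            | assumption

end Unif



variable {M : Matroid α} {B C D I J L S X Y : Set α} {a b c e p q u v w x y z : α}

section Main

variable (hfin : M.E.Finite) (hs : M.IsSimple) (hrank : M.RankEq 3)

include hfin hs hrank in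
lemma isLine_closure_pair (hab : a ≠ b) (ha : a ∈ M.E) (hb : b ∈ M.E) :
    M.IsLine (M.closure {a, b}) := by
  have hpairE : ({a, b} : Set α) ⊆ M.E := by simp [insert_subset_iff, ha, hb]
  have hsubcl := M.subset_closure {a, b} hpairE
  refine ⟨M.closure_subset_ground _, fun I hIL hI => line_card hfin hs hrank hab ha hb hI hIL,
    ⟨{a, b}, hsubcl, pair_indep hs ha hb hab, ncard_pair hab⟩, ?_⟩
  intro L' hLL' hL'E hbound
  refine Subset.antisymm ?_ hLL'
  intro t ht
  by_contra htcl
  have htE : t ∈ M.E := hL'E ht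
  have htab : t ∉ ({a, b} : Set α) := fun h => htcl (hsubcl h)
  have hind : M.Indep {t, a, b} := insert3 hs hab ha hb htE htcl
  have hsub : ({t, a, b} : Set α) ⊆ L' := by
    refine insert_subset ht (insert_subset ?_ ?_) <;>
      [exact hLL' (hsubcl (by simp)); exact singleton_subset_iff.mpr (hLL' (hsubcl (by simp)))]
  have := hbound _ hsub hind
  rw [ncard_insert_of_notMem htab, ncard_pair hab] at this
  omega

include hfin hs hrank in
lemma two_lines (hU35 : ¬ M.HasUnifRestriction 3 5) (heE : e ∈ M.E)
    (hSE : S ⊆ M.E) (hSne : ∀ x ∈ S, x ≠ e) (hS5 : S.ncard = 5)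
    (hpair : ∀ x ∈ S, ∀ y ∈ S, x ≠ y → M.Indep {e, x, y}) :
    ∃ L₁ L₂ : Set α, M.IsLine L₁ ∧ M.IsLine L₂ ∧ M.E = L₁ ∪ L₂ := by
  classical
  have hSfin : S.Finite := hfin.subset hSE
  -- a dependent triple inside S
  have hex : ∃ a ∈ S, ∃ b ∈ S, ∃ c ∈ S, a ≠ b ∧ a ≠ c ∧ b ≠ c ∧ ¬ M.Indep {a, b, c} := by
    by_contra h; push_neg at h
    exact hU35 ⟨S, hSE, isUnif35 hfin hs hrank hSE hS5 h⟩
  obtain ⟨a, haS, b, hbS, c, hcS, hab, hac, hbc, hdep⟩ := hex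
  have haE : a ∈ M.E := hSE haS
  have hbE : b ∈ M.E := hSE hbS
  have hcE : c ∈ M.E := hSE hcS
  set L := M.closure {a, b} with hLdef
  have hpairE : ({a, b} : Set α) ⊆ M.E := by simp [insert_subset_iff, haE, hbE]
  have haL : a ∈ L := M.subset_closure {a, b} hpairE (by simp)
  have hbL : b ∈ L := M.subset_closure {a, b} hpairE (by simp)
  have hcL : c ∈ L := dep3_mem_closure hs hab hac.symm hbc.symm haE hbE hcE hdep
  have heL : e ∉ L :=
    indep3_not_mem_closure (hpair a haS b hbS hab) (hSne a haS).symm (hSne b hbS).symm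
  have hLE : L ⊆ M.E := M.closure_subset_ground _
  have hLfin : L.Finite := hfin.subset hLE
  have hL3 : 3 ≤ L.ncard := by
    have hsub : ({a, b, c} : Set α) ⊆ L := by simp [insert_subset_iff, haL, hbL, hcL]
    have h3 : ({a, b, c} : Set α).ncard = 3 := by
      rw [ncard_insert_of_notMem (by simp [hab, hac]), ncard_pair hbc]
    have := ncard_le_ncard hsub hLfin
    omega
  -- members of S "touched" by L
  set T := {s₀ ∈ S | (M.closure {e, s₀} ∩ L).Nonempty} with hTdef
  have hTS : T ⊆ S := sep_subset _ _
  have hpairspan : ∀ s₀ ∈ S, ∀ p₀, p₀ ∈ M.closure {e, s₀} → p₀ ≠ e →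
      M.closure {e, p₀} = M.closure {e, s₀} := by
    intro s₀ hs₀ p₀ hp₀ hp₀e
    have hes : e ≠ s₀ := (hSne s₀ hs₀).symm
    have heederiv : e ∈ M.closure {e, s₀} :=
      M.subset_closure {e, s₀} (by simp [insert_subset_iff, heE, hSE hs₀]) (by simp)
    exact span2 hfin hs hrank hes heE (hSE hs₀) heederiv hp₀ hp₀e.symm
  have hnotmemcl : ∀ s₀ ∈ S, ∀ s₁ ∈ S, s₀ ≠ s₁ → s₁ ∉ M.closure {e, s₀} := by
    intro s₀ hs₀ s₁ hs₁ hne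
    exact indep3_not_mem_closure (indep3_comm12 (indep3_comm23 (hpair s₀ hs₀ s₁ hs₁ hne)))
      (hSne s₁ hs₁) hne.symm
  let f : α → α := fun s₀ => if h : (M.closure {e, s₀} ∩ L).Nonempty then h.choose else a
  have hfmem : ∀ s₀ ∈ T, f s₀ ∈ M.closure {e, s₀} ∩ L := by
    intro s₀ hsT
    obtain ⟨hsS, hne⟩ := hsT
    simp only [f, dif_pos hne]
    exact hne.choose_spec
  have hinj : Set.InjOn f T := by
    intro s₀ hsT s₁ hsT' heq
    by_contra hss
    have h1 := hfmem s₀ hsT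
    have h2 := hfmem s₁ hsT'
    have hpe : f s₀ ≠ e := fun h => heL (h ▸ h1.2)
    have e1 : M.closure {e, f s₀} = M.closure {e, s₀} := hpairspan s₀ hsT.1 _ h1.1 hpe
    have h2' : f s₀ ∈ M.closure {e, s₁} ∩ L := heq ▸ h2
    have e2 : M.closure {e, f s₀} = M.closure {e, s₁} := hpairspan s₁ hsT'.1 _ h2'.1 hpe
    have hs1mem : s₁ ∈ M.closure {e, s₀} := by
      rw [← e1, e2]
      exact M.subset_closure {e, s₁} (by simp [insert_subset_iff, heE, hSE hsT'.1]) (by simp)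
    exact hnotmemcl s₀ hsT.1 s₁ hsT'.1 hss hs1mem
  have hTcard : T.ncard ≤ L.ncard := by
    have himg : f '' T ⊆ L := by
      rintro _ ⟨s₀, hsT, rfl⟩
      exact (hfmem s₀ hsT).2
    have := ncard_le_ncard himg hLfin
    rwa [ncard_image_of_injOn hinj] at this
  have hcount : (S \ T).ncard + T.ncard = 5 := by
    rw [ncard_diff_add_ncard_of_subset hTS hSfin, hS5]
  have huntouched : ∀ q₀ ∈ S \ T, M.closure {e, q₀} ∩ L = ∅ := by
    intro q₀ hq₀
    by_contra h
    exact hq₀.2 ⟨hq₀.1, nonempty_iff_ne_empty.mpr h⟩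
  have huntouchedL : ∀ q₀ ∈ S \ T, q₀ ∉ L := by
    intro q₀ hq₀ hq₀L
    have : q₀ ∈ M.closure {e, q₀} ∩ L :=
      ⟨M.subset_closure {e, q₀} (by simp [insert_subset_iff, heE, hSE hq₀.1]) (by simp), hq₀L⟩
    rw [huntouched q₀ hq₀] at this
    exact this
  by_cases hU2 : 1 < (S \ T).ncard
  · -- two untouched classes: contradiction
    exfalso
    obtain ⟨q, q', hqU, hq'U, hqq'⟩ := (one_lt_ncard_iff (hSfin.subset diff_subset)).mp hU2
    have hqS : q ∈ S := hqU.1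
    have hq'S : q' ∈ S := hq'U.1
    have hqE : q ∈ M.E := hSE hqS
    have hq'E : q' ∈ M.E := hSE hq'S
    have hqL : q ∉ L := huntouchedL q hqU
    have hq'L : q' ∉ L := huntouchedL q' hq'U
    have hmeet : (L ∩ M.closure {q, q'}).Subsingleton :=
      lines_meet hfin hs hrank hab haE hbE hqq' hqE hq'E hqL
    have h2 : 2 ≤ (L \ M.closure {q, q'}).ncard := by
      have := ncard_diff_subsingleton_ge hLfin hmeet
      omega
    obtain ⟨x₁, x₂, hx₁, hx₂, hx12⟩ :=
      (one_lt_ncard_iff ((hLfin.diff (t := M.closure {q, q'})))).mp (by omega)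
    have hx₁L : x₁ ∈ L := hx₁.1
    have hx₂L : x₂ ∈ L := hx₂.1
    have hx₁E : x₁ ∈ M.E := hLE hx₁L
    have hx₂E : x₂ ∈ M.E := hLE hx₂L
    have hclx : M.closure {x₁, x₂} = L := span2 hfin hs hrank hab haE hbE hx₁L hx₂L hx12
    have hqcl : M.closure {e, q} ∩ L = ∅ := huntouched q hqU
    have hq'cl : M.closure {e, q'} ∩ L = ∅ := huntouched q' hq'U
    have hx₁q : x₁ ∉ M.closure {e, q} := fun h => by
      have : x₁ ∈ M.closure {e, q} ∩ L := ⟨h, hx₁L⟩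
      rw [hqcl] at this; exact this
    have hx₂q : x₂ ∉ M.closure {e, q} := fun h => by
      have : x₂ ∈ M.closure {e, q} ∩ L := ⟨h, hx₂L⟩
      rw [hqcl] at this; exact this
    have hx₁q' : x₁ ∉ M.closure {e, q'} := fun h => by
      have : x₁ ∈ M.closure {e, q'} ∩ L := ⟨h, hx₁L⟩
      rw [hq'cl] at this; exact this
    have hx₂q' : x₂ ∉ M.closure {e, q'} := fun h => by
      have : x₂ ∈ M.closure {e, q'} ∩ L := ⟨h, hx₂L⟩
      rw [hq'cl] at this; exact this
    have heq' : e ≠ q := (hSne q hqS).symm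
    have heq'' : e ≠ q' := (hSne q' hq'S).symm
    refine no_five hfin hs hrank hU35 heE hx₁E hx₂E hqE hq'E
      (fun h => heL (h ▸ hx₁L)) (fun h => heL (h ▸ hx₂L)) heq' heq'' hx12
      (fun h => hqL (h ▸ hx₁L)) (fun h => hq'L (h ▸ hx₁L))
      (fun h => hqL (h ▸ hx₂L)) (fun h => hq'L (h ▸ hx₂L)) hqq'
      ?_ ?_ ?_ ?_ ?_ ?_ ?_ ?_ ?_ ?_
    · exact insert3 hs hx12 hx₁E hx₂E heE (hclx ▸ heL)
    · exact indep3_comm12 (insert3 hs heq' heE hqE hx₁E hx₁q)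
    · exact indep3_comm12 (insert3 hs heq'' heE hq'E hx₁E hx₁q')
    · exact indep3_comm12 (insert3 hs heq' heE hqE hx₂E hx₂q)
    · exact indep3_comm12 (insert3 hs heq'' heE hq'E hx₂E hx₂q')
    · exact hpair q hqS q' hq'S hqq'
    · exact indep3_comm23 (indep3_comm12 (insert3 hs hx12 hx₁E hx₂E hqE (hclx ▸ hqL)))
    · exact indep3_comm23 (indep3_comm12 (insert3 hs hx12 hx₁E hx₂E hq'E (hclx ▸ hq'L)))
    · exact insert3 hs hqq' hqE hq'E hx₁E hx₁.2
    · exact insert3 hs hqq' hqE hq'E hx₂E hx₂.2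
  · -- at most one untouched class
    have hT4 : 4 ≤ T.ncard := by omega
    have hL4 : 4 ≤ L.ncard := le_trans hT4 hTcard
    by_cases hU0 : (S \ T).ncard = 0
    · -- big line case : L has ≥ 5 points
      have hT5 : T.ncard = 5 := by omega
      have hL5 : 5 ≤ L.ncard := le_trans (by omega) hTcard
      have hBL : ∀ u₀ v₀ w₀, u₀ ∈ M.E → v₀ ∈ M.E → w₀ ∈ M.E → u₀ ∉ L → v₀ ∉ L → w₀ ∉ L →
          u₀ ≠ v₀ → u₀ ≠ w₀ → v₀ ≠ w₀ → ¬ M.Indep {u₀, v₀, w₀} := by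
        intro u₀ v₀ w₀ hu hv hw huL hvL hwL huv huw hvw hind
        have m1 : (L ∩ M.closure {u₀, v₀}).Subsingleton :=
          lines_meet hfin hs hrank hab haE hbE huv hu hv huL
        have m2 : (L ∩ M.closure {u₀, w₀}).Subsingleton :=
          lines_meet hfin hs hrank hab haE hbE huw hu hw huL
        have m3 : (L ∩ M.closure {v₀, w₀}).Subsingleton :=
          lines_meet hfin hs hrank hab haE hbE hvw hv hw hvL
        have c1 := ncard_diff_subsingleton_ge hLfin m1
        have c2 : (L \ M.closure {u₀, v₀}).ncard - 1 ≤
            ((L \ M.closure {u₀, v₀}) \ M.closure {u₀, w₀}).ncard :=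
          ncard_diff_subsingleton_ge (hLfin.diff) (m2.anti
            (inter_subset_inter_left _ diff_subset))
        have c3 : ((L \ M.closure {u₀, v₀}) \ M.closure {u₀, w₀}).ncard - 1 ≤
            (((L \ M.closure {u₀, v₀}) \ M.closure {u₀, w₀}) \ M.closure {v₀, w₀}).ncard :=
          ncard_diff_subsingleton_ge ((hLfin.diff).diff) (m3.anti
            (inter_subset_inter_left _ (diff_subset.trans diff_subset)))
        obtain ⟨x₁, x₂, hx₁, hx₂, hx12⟩ :=
          (one_lt_ncard_iff (((hLfin.diff (t := M.closure {u₀, v₀})).diff (t := M.closure {u₀, w₀})).diff (t := M.closure {v₀, w₀}))).mp (by omega)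
        obtain ⟨⟨⟨hx₁L, hx₁uv⟩, hx₁uw⟩, hx₁vw⟩ := hx₁
        obtain ⟨⟨⟨hx₂L, hx₂uv⟩, hx₂uw⟩, hx₂vw⟩ := hx₂
        have hx₁E : x₁ ∈ M.E := hLE hx₁L
        have hx₂E : x₂ ∈ M.E := hLE hx₂L
        have hclx : M.closure {x₁, x₂} = L := span2 hfin hs hrank hab haE hbE hx₁L hx₂L hx12
        refine no_five hfin hs hrank hU35 hu hv hw hx₁E hx₂E
          huv huw (fun h => huL (h ▸ hx₁L)) (fun h => huL (h ▸ hx₂L))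
          hvw (fun h => hvL (h ▸ hx₁L)) (fun h => hvL (h ▸ hx₂L))
          (fun h => hwL (h ▸ hx₁L)) (fun h => hwL (h ▸ hx₂L)) hx12
          hind ?_ ?_ ?_ ?_ ?_ ?_ ?_ ?_ ?_
        · exact indep3_comm23 (indep3_comm12 (insert3 hs huv hu hv hx₁E hx₁uv))
        · exact indep3_comm23 (indep3_comm12 (insert3 hs huv hu hv hx₂E hx₂uv))
        · exact indep3_comm23 (indep3_comm12 (insert3 hs huw hu hw hx₁E hx₁uw))
        · exact indep3_comm23 (indep3_comm12 (insert3 hs huw hu hw hx₂E hx₂uw))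
        · exact insert3 hs hx12 hx₁E hx₂E hu (hclx ▸ huL)
        · exact indep3_comm23 (indep3_comm12 (insert3 hs hvw hv hw hx₁E hx₁vw))
        · exact indep3_comm23 (indep3_comm12 (insert3 hs hvw hv hw hx₂E hx₂vw))
        · exact insert3 hs hx12 hx₁E hx₂E hv (hclx ▸ hvL)
        · exact insert3 hs hx12 hx₁E hx₂E hw (hclx ▸ hwL)
      by_cases hv : ∃ v₀, v₀ ∈ M.E ∧ v₀ ∉ L ∧ v₀ ≠ e
      · obtain ⟨v₀, hvE, hvL, hve⟩ := hv
        refine ⟨L, M.closure {e, v₀}, isLine_closure_pair hfin hs hrank hab haE hbE,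
          isLine_closure_pair hfin hs hrank hve.symm heE hvE, ?_⟩
        refine Subset.antisymm ?_ (union_subset hLE (M.closure_subset_ground _))
        intro y₀ hyE
        by_contra hy
        rw [mem_union] at hy
        push_neg at hy
        obtain ⟨hyL, hyL'⟩ := hy
        have hsubev : ({e, v₀} : Set α) ⊆ M.E := by simp [insert_subset_iff, heE, hvE]
        have hye : y₀ ≠ e := by rintro rfl; exact hyL' (M.subset_closure _ hsubev (by simp))
        have hyv : y₀ ≠ v₀ := by rintro rfl; exact hyL' (M.subset_closure _ hsubev (by simp))
        have hdep' := hBL e v₀ y₀ heE hvE hyE heL hvL hyL hve.symm hye.symm hyv.symm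
        have : y₀ ∈ M.closure {e, v₀} :=
          dep3_mem_closure hs hve.symm hye hyv heE hvE hyE hdep'
        exact hyL' this
      · push_neg at hv
        refine ⟨L, M.closure {e, a}, isLine_closure_pair hfin hs hrank hab haE hbE,
          isLine_closure_pair hfin hs hrank (fun h => heL (h ▸ haL)) heE haE, ?_⟩
        refine Subset.antisymm ?_ (union_subset hLE (M.closure_subset_ground _))
        intro y₀ hyE
        by_cases hyL : y₀ ∈ L
        · exact Or.inl hyL
        · right
          rw [hv y₀ hyE hyL]
          exact M.subset_closure _ (by simp [insert_subset_iff, heE, haE]) (by simp)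
    · -- exactly one untouched class
      have hU1 : (S \ T).ncard = 1 := by omega
      obtain ⟨x₀, hx₀⟩ := ncard_eq_one.mp hU1
      have hxU : x₀ ∈ S \ T := hx₀ ▸ rfl
      have hxS : x₀ ∈ S := hxU.1
      have hxE : x₀ ∈ M.E := hSE hxS
      have hxe : x₀ ≠ e := hSne x₀ hxS
      have hxcl : M.closure {e, x₀} ∩ L = ∅ := huntouched x₀ hxU
      have hxL : x₀ ∉ L := huntouchedL x₀ hxU
      have hsubex : ({e, x₀} : Set α) ⊆ M.E := by simp [insert_subset_iff, heE, hxE]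
      refine ⟨L, M.closure {e, x₀}, isLine_closure_pair hfin hs hrank hab haE hbE,
        isLine_closure_pair hfin hs hrank hxe.symm heE hxE, ?_⟩
      refine Subset.antisymm ?_ (union_subset hLE (M.closure_subset_ground _))
      intro y₀ hyE
      by_contra hy
      rw [mem_union] at hy
      push_neg at hy
      obtain ⟨hyL, hyL'⟩ := hy
      have hye : y₀ ≠ e := by rintro rfl; exact hyL' (M.subset_closure _ hsubex (by simp))
      have hyx : y₀ ≠ x₀ := by rintro rfl; exact hyL' (M.subset_closure _ hsubex (by simp))
      have m1 : (L ∩ M.closure {e, y₀}).Subsingleton :=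
        lines_meet hfin hs hrank hab haE hbE hye.symm heE hyE heL
      have m2 : (L ∩ M.closure {y₀, x₀}).Subsingleton :=
        lines_meet hfin hs hrank hab haE hbE hyx hyE hxE hyL
      have c1 := ncard_diff_subsingleton_ge hLfin m1
      have c2 : (L \ M.closure {e, y₀}).ncard - 1 ≤
          ((L \ M.closure {e, y₀}) \ M.closure {y₀, x₀}).ncard :=
        ncard_diff_subsingleton_ge (hLfin.diff) (m2.anti
          (inter_subset_inter_left _ diff_subset))
      obtain ⟨a', b', ha', hb', hab'⟩ :=
        (one_lt_ncard_iff ((hLfin.diff (t := M.closure {e, y₀})).diff (t := M.closure {y₀, x₀}))).mp (by omega)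
      obtain ⟨⟨ha'L, ha'ey⟩, ha'yx⟩ := ha'
      obtain ⟨⟨hb'L, hb'ey⟩, hb'yx⟩ := hb'
      have ha'E : a' ∈ M.E := hLE ha'L
      have hb'E : b' ∈ M.E := hLE hb'L
      have ha'ex : a' ∉ M.closure {e, x₀} := fun h => by
        have : a' ∈ M.closure {e, x₀} ∩ L := ⟨h, ha'L⟩
        rw [hxcl] at this; exact this
      have hb'ex : b' ∉ M.closure {e, x₀} := fun h => by
        have : b' ∈ M.closure {e, x₀} ∩ L := ⟨h, hb'L⟩
        rw [hxcl] at this; exact this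
      have hclab' : M.closure {a', b'} = L := span2 hfin hs hrank hab haE hbE ha'L hb'L hab'
      refine no_five hfin hs hrank hU35 heE ha'E hb'E hyE hxE
        (fun h => heL (h ▸ ha'L)) (fun h => heL (h ▸ hb'L)) hye.symm hxe.symm
        hab' (fun h => hyL (h ▸ ha'L)) (fun h => hxL (h ▸ ha'L))
        (fun h => hyL (h ▸ hb'L)) (fun h => hxL (h ▸ hb'L)) hyx
        ?_ ?_ ?_ ?_ ?_ ?_ ?_ ?_ ?_ ?_
      · exact insert3 hs hab' ha'E hb'E heE (hclab' ▸ heL)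
      · exact indep3_comm12 (insert3 hs hye.symm heE hyE ha'E ha'ey)
      · exact indep3_comm12 (insert3 hs hxe.symm heE hxE ha'E ha'ex)
      · exact indep3_comm12 (insert3 hs hye.symm heE hyE hb'E hb'ey)
      · exact indep3_comm12 (insert3 hs hxe.symm heE hxE hb'E hb'ex)
      · exact indep3_comm12 (insert3 hs hxe.symm heE hxE hyE hyL')
      · exact indep3_comm23 (indep3_comm12 (insert3 hs hab' ha'E hb'E hyE (hclab' ▸ hyL)))
      · exact indep3_comm23 (indep3_comm12 (insert3 hs hab' ha'E hb'E hxE (hclab' ▸ hxL)))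
      · exact insert3 hs hyx hyE hxE ha'E ha'yx
      · exact insert3 hs hyx hyE hxE hb'E hb'yx

end Main



variable {M : Matroid α} {B C D I J L S X Y : Set α} {a b c e p q u v w x y z : α}

section Extract

variable (hfin : M.E.Finite) (hs : M.IsSimple) (hrank : M.RankEq 3)

include hfin hs hrank in
lemma key_config (hmin : M.HasUnifMinor 2 5) :
    ∃ e ∈ M.E, ∃ S : Set α, S ⊆ M.E ∧ (∀ x ∈ S, x ≠ e) ∧ S.ncard = 5 ∧
      ∀ x ∈ S, ∀ y ∈ S, x ≠ y → M.Indep {e, x, y} := by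
  obtain ⟨N, ⟨C, D, hCE, hDE, hdisj, rfl⟩, hNfin, hN5, hNbase⟩ := hmin
  set A : Set α := ((M.con C).del D).E with hAdef
  have hAEC : A ⊆ M.E \ C := diff_subset
  have hAE : A ⊆ M.E := hAEC.trans diff_subset
  have hAfin : A.Finite := hNfin
  have hA5 : A.ncard = 5 := hN5
  obtain ⟨J, hJ⟩ := M.exists_isBasis' C
  have hJC : J ⊆ C := hJ.subset
  have hJfin : J.Finite := hfin.subset hJ.indep.subset_ground
  have conIndep_of : ∀ I, ((M.con C).del D).Indep I → (M.con C).Indep I :=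
    fun I h => (restrict_indep_iff.mp h).1
  have hNindep : ∀ I, I ⊆ A → (M.con C).Indep I → ((M.con C).del D).Indep I :=
    fun I hIA h => restrict_indep_iff.mpr ⟨h, hIA⟩
  have hpairbase : ∀ x ∈ A, ∀ y ∈ A, x ≠ y → ((M.con C).del D).IsBase {x, y} := by
    intro x hx y hy hxy
    exact (hNbase {x, y}).mpr ⟨insert_subset hx (singleton_subset_iff.mpr hy), ncard_pair hxy⟩
  have hpairM : ∀ x ∈ A, ∀ y ∈ A, x ≠ y → M.Indep ({x, y} ∪ J) := by
    intro x hx y hy hxy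
    exact (con_indep_extract hJ (conIndep_of _ (hpairbase x hx y hy hxy).indep)).1
  obtain ⟨x₀, y₀, hx₀, hy₀, hxy₀⟩ := (one_lt_ncard_iff hAfin).mp (by omega)
  have hdisjAJ : ∀ x ∈ A, x ∉ J := fun x hx hxJ => (hAEC hx).2 (hJC hxJ)
  have hJ1 : J.ncard ≤ 1 := by
    have hind := hpairM x₀ hx₀ y₀ hy₀ hxy₀
    have hcard := indep_card_le hfin hrank hind
    have hdisj2 : Disjoint ({x₀, y₀} : Set α) J := by
      rw [disjoint_left]
      rintro t ht htJ
      simp only [mem_insert_iff, mem_singleton_iff] at ht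
      rcases ht with rfl | rfl
      · exact hdisjAJ _ hx₀ htJ
      · exact hdisjAJ _ hy₀ htJ
    rw [ncard_union_eq hdisj2 (by simp) hJfin, ncard_pair hxy₀] at hcard
    omega
  rcases (by omega : J.ncard = 0 ∨ J.ncard = 1) with hJ0 | hJ0
  · -- J empty : A lies on a line; pick e off the line
    have hJemp : J = ∅ := (ncard_eq_zero hJfin).mp hJ0
    have htriple : ∀ x ∈ A, ∀ y ∈ A, ∀ z ∈ A, x ≠ y → x ≠ z → y ≠ z →
        ¬ M.Indep {x, y, z} := by
      intro x hx y hy z hz hxy hxz hyz hind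
      have hsub : ({x, y, z} : Set α) ⊆ M.E \ C := by
        intro t ht
        rcases ht with rfl | rfl | rfl
        · exact hAEC hx
        · exact hAEC hy
        · exact hAEC hz
      have hcon : (M.con C).Indep {x, y, z} :=
        con_indep_intro hCE hJ hsub (by rwa [hJemp, union_empty])
      have hNind : ((M.con C).del D).Indep {x, y, z} := by
        refine hNindep _ ?_ hcon
        intro t ht
        rcases ht with rfl | rfl | rfl <;> assumption
      obtain ⟨Bb, hBb, hsubB⟩ := hNind.exists_isBase_superset
      obtain ⟨hBbA, hBb2⟩ := (hNbase Bb).mp hBb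
      have h3 : ({x, y, z} : Set α).ncard = 3 := by
        rw [ncard_insert_of_notMem (by simp [hxy, hxz]), ncard_pair hyz]
      have := ncard_le_ncard hsubB (hAfin.subset hBbA)
      omega
    have hx₀E : x₀ ∈ M.E := hAE hx₀
    have hy₀E : y₀ ∈ M.E := hAE hy₀
    have hAL : A ⊆ M.closure {x₀, y₀} := by
      intro z hz
      by_cases hzx : z = x₀
      · subst hzx; exact M.subset_closure _ (by simp [insert_subset_iff, hx₀E, hy₀E]) (by simp)
      by_cases hzy : z = y₀
      · subst hzy; exact M.subset_closure _ (by simp [insert_subset_iff, hx₀E, hy₀E]) (by simp)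
      exact dep3_mem_closure hs hxy₀ hzx hzy hx₀E hy₀E (hAE hz)
        (htriple x₀ hx₀ y₀ hy₀ z hz hxy₀ (Ne.symm hzx) (Ne.symm hzy))
    obtain ⟨B₀, hB₀, hB₀3⟩ := id hrank
    have hnsub : ¬ B₀ ⊆ M.closure {x₀, y₀} := by
      intro hsub
      have := line_card hfin hs hrank hxy₀ hx₀E hy₀E hB₀.indep hsub
      omega
    obtain ⟨e₀, he₀B, he₀L⟩ := not_subset.mp hnsub
    have he₀E : e₀ ∈ M.E := hB₀.subset_ground he₀B
    refine ⟨e₀, he₀E, A, hAE, fun x hx hxe => he₀L (hxe ▸ hAL hx), hA5, ?_⟩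
    intro x hx y hy hxy
    have hcl : M.closure {x, y} = M.closure {x₀, y₀} :=
      span2 hfin hs hrank hxy₀ hx₀E hy₀E (hAL hx) (hAL hy) hxy
    exact insert3 hs hxy (hAE hx) (hAE hy) he₀E (hcl ▸ he₀L)
  · -- J = {c₀} : contract a single point
    obtain ⟨c₀, hc₀⟩ := ncard_eq_one.mp hJ0
    have hc₀C : c₀ ∈ C := hJC (hc₀ ▸ rfl)
    refine ⟨c₀, hCE hc₀C, A, hAE, fun x hx hxc => (hAEC hx).2 (hxc ▸ hc₀C), hA5, ?_⟩
    intro x hx y hy hxy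
    have := hpairM x hx y hy hxy
    rwa [hc₀, union_singleton] at this

end Extract


end U35Aux

/-- A simple rank-3 matroid with no `U_{3,5}`-restriction either has no `U_{2,5}`-minor or
is the union of two lines. -/
theorem unif_35_restriction_free_structure (M : Matroid α)
    (hfin : M.E.Finite) (hsimple : M.IsSimple) (hrank : M.RankEq 3)
    (hU35 : ¬ M.HasUnifRestriction 3 5) :
    (¬ M.HasUnifMinor 2 5) ∨
      ∃ L₁ L₂ : Set α, M.IsLine L₁ ∧ M.IsLine L₂ ∧ M.E = L₁ ∪ L₂ := by
  by_cases hm : M.HasUnifMinor 2 5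
  · right
    obtain ⟨e, heE, S, hSE, hSne, hS5, hpair⟩ := U35Aux.key_config hfin hsimple hrank hm
    exact U35Aux.two_lines hfin hsimple hrank hU35 heE hSE hSne hS5 hpair
  · exact Or.inl hm
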